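/- Fix λ > 0 and suppose real numbers (π_{j,n})_{j∈{0,1}, n∈ℤ₊} satisfy, for j = 0 and j = 1: (λ+λ₀+γ)π_{j,0} − δ_{j,0} = μ₁π_{j,1} + α/λ, (λ+ω₁+γ)π_{j,1} − δ_{j,1} = λ₀π_{j,0} + μ₂π_{j,2} + β/λ, and (λ+ω_n+γ)π_{j,n} − δ_{j,n} = λ_{n−1}π_{j,n−1} + μ_{n+1}π_{j,n+1} for n ≥ 2. Set A_{j,n} = 1 − λπ_{j,n} and H = λ^{−1}[(λ + αA_{0,0})(λ + βA_{1,1}) − αβA_{1,0}A_{0,1}], and assume H ≠ 0. Define φ_n = [(λ + βA_{1,1})π_{0,n} − βA_{0,1}π_{1,n}]/H for n ≥ 0. Then (λ+λ₀+β)φ₀ − 1 = μ₁φ₁, (λ+ω₁+α)φ₁ = λ₀φ₀ + μ₂φ₂, and (λ+ω_n+γ)φ_n = λ_{n−1}φ_{n−1} + μ_{n+1}φ_{n+1} for all n ≥ 2. -/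

import Mathlib

/-- If `π0, π1` satisfy the resolvent equations of the birth-death
process with two-type catastrophes (rows `j = 0, 1`), `A_{j,n} = 1 - λπ_{j,n}`,
`H = λ⁻¹[(λ + αA_{0,0})(λ + βA_{1,1}) - αβA_{1,0}A_{0,1}] ≠ 0`, and
`φ_n = [(λ + βA_{1,1})π_{0,n} - βA_{0,1}π_{1,n}]/H`, then `φ` satisfies the killed-process
resolvent equations for the row `j = 0`. -/
theorem stmt_6
    (lam mu : ℕ → ℝ) (hlam : ∀ i, 0 < lam i) (hmu : ∀ i, 1 ≤ i → 0 < mu i)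
    (α β : ℝ) (hα : 0 ≤ α) (hβ : 0 ≤ β)
    (l : ℝ) (hl : 0 < l)
    (π0 π1 : ℕ → ℝ)
    (h00 : (l + lam 0 + (α + β)) * π0 0 - 1 = mu 1 * π0 1 + α / l)
    (h01 : (l + (lam 1 + mu 1) + (α + β)) * π0 1
      = lam 0 * π0 0 + mu 2 * π0 2 + β / l)
    (h0n : ∀ n, 2 ≤ n → (l + (lam n + mu n) + (α + β)) * π0 n
      = lam (n - 1) * π0 (n - 1) + mu (n + 1) * π0 (n + 1))
    (h10 : (l + lam 0 + (α + β)) * π1 0 = mu 1 * π1 1 + α / l)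
    (h11 : (l + (lam 1 + mu 1) + (α + β)) * π1 1 - 1
      = lam 0 * π1 0 + mu 2 * π1 2 + β / l)
    (h1n : ∀ n, 2 ≤ n → (l + (lam n + mu n) + (α + β)) * π1 n
      = lam (n - 1) * π1 (n - 1) + mu (n + 1) * π1 (n + 1))
    (H : ℝ)
    (hH : H = l⁻¹ * ((l + α * (1 - l * π0 0)) * (l + β * (1 - l * π1 1))
      - α * β * (1 - l * π1 0) * (1 - l * π0 1)))
    (hHne : H ≠ 0)
    (φ : ℕ → ℝ)
    (hφ : ∀ n, φ n = ((l + β * (1 - l * π1 1)) * π0 n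
      - β * (1 - l * π0 1) * π1 n) / H) :
    ((l + lam 0 + β) * φ 0 - 1 = mu 1 * φ 1) ∧
    ((l + (lam 1 + mu 1) + α) * φ 1 = lam 0 * φ 0 + mu 2 * φ 2) ∧
    (∀ n, 2 ≤ n → (l + (lam n + mu n) + (α + β)) * φ n
      = lam (n - 1) * φ (n - 1) + mu (n + 1) * φ (n + 1)) := by
  have hl' : (l : ℝ) ≠ 0 := ne_of_gt hl
  set c := l + β * (1 - l * π1 1) with hc
  set d := β * (1 - l * π0 1) with hd
  have e : ∀ n, φ n * H = c * π0 n - d * π1 n := by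
    intro n; rw [hφ n]; field_simp
  have hH' : l * H = (l + α * (1 - l * π0 0)) * c - α * d * (1 - l * π1 0) := by
    rw [hH, hc, hd]; field_simp
  have h00' : l * ((l + lam 0 + (α + β)) * π0 0 - 1) = l * (mu 1 * π0 1) + α := by
    rw [h00]; field_simp
  have h10' : l * ((l + lam 0 + (α + β)) * π1 0) = l * (mu 1 * π1 1) + α := by
    rw [h10]; field_simp
  have h01' : l * ((l + (lam 1 + mu 1) + (α + β)) * π0 1)
      = l * (lam 0 * π0 0 + mu 2 * π0 2) + β := by
    rw [h01]; field_simp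
  have h11' : l * ((l + (lam 1 + mu 1) + (α + β)) * π1 1 - 1)
      = l * (lam 0 * π1 0 + mu 2 * π1 2) + β := by
    rw [h11]; field_simp
  have hHl : H * l ≠ 0 := mul_ne_zero hHne hl'
  refine ⟨?_, ?_, ?_⟩
  · have key : ((l + lam 0 + β) * φ 0 - 1) * (H * l) = (mu 1 * φ 1) * (H * l) := by
      linear_combination ((l + lam 0 + β) * l) * e 0 - (mu 1 * l) * e 1
        + c * h00' - d * h10' - hH'
    exact mul_right_cancel₀ hHl key
  · have key : ((l + (lam 1 + mu 1) + α) * φ 1) * (H * l)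
        = (lam 0 * φ 0 + mu 2 * φ 2) * (H * l) := by
      linear_combination ((l + (lam 1 + mu 1) + α) * l) * e 1
        - (lam 0 * l) * e 0 - (mu 2 * l) * e 2 + c * h01' - d * h11'
    exact mul_right_cancel₀ hHl key
  · intro n hn
    have key : ((l + (lam n + mu n) + (α + β)) * φ n) * H
        = (lam (n - 1) * φ (n - 1) + mu (n + 1) * φ (n + 1)) * H := by
      linear_combination (l + (lam n + mu n) + (α + β)) * e n
        - lam (n - 1) * e (n - 1) - mu (n + 1) * e (n + 1)
        + c * (h0n n hn) - d * (h1n n hn)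
    exact mul_right_cancel₀ hHne key
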